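/- Let S be a finite non-empty linearly ordered set and ω : S → ℕ_{>0} a weight function. Then there exists a binary tree T whose set of leaves is S, such that the linear order on S agrees with the left-to-right order of the leaves of T, and for each x ∈ S the depth of the leaf x in T is at most log₂(ω(S)) − log₂(ω(x)) + 3. -/

import Mathlib

/-- A binary tree with leaves labelled by `α`: each node has at most two
children, distinguished as left and right (a node with exactly one child is
allowed, recorded with which side it is on being irrelevant for leaf order). -/
inductive BinTree (α : Type) : Type
  | leaf (a : α)
  | node1 (t : BinTree α)
  | node2 (l r : BinTree α)

namespace BinTree

/-- The list of (leaf label, depth) pairs, in left-to-right order. -/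
def leafDepths {α : Type} : BinTree α → List (α × ℕ)
  | leaf a => [(a, 0)]
  | node1 t => (leafDepths t).map (fun p => (p.1, p.2 + 1))
  | node2 l r => ((leafDepths l) ++ (leafDepths r)).map (fun p => (p.1, p.2 + 1))

/-- The leaves in left-to-right order. -/
def leaves {α : Type} (t : BinTree α) : List α := (leafDepths t).map Prod.fst

end BinTree

namespace StmtAux

open BinTree

variable {α : Type}

@[simp] lemma leaves_leaf (a : α) : (BinTree.leaf a).leaves = [a] := rfl

@[simp] lemma leaves_node1 (t : BinTree α) : (BinTree.node1 t).leaves = t.leaves := by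
  simp only [BinTree.leaves, BinTree.leafDepths, List.map_map]
  rfl

@[simp] lemma leaves_node2 (l r : BinTree α) :
    (BinTree.node2 l r).leaves = l.leaves ++ r.leaves := by
  simp only [BinTree.leaves, BinTree.leafDepths, List.map_map, List.map_append]
  rfl

lemma dropWhile_ge {m w : α → ℕ} {c : ℕ} {L : List α}
    (hpw : L.Pairwise (fun x y => m x + w x + w y ≤ m y)) :
    ∀ z ∈ L.dropWhile (fun z => decide (m z < c)), c ≤ m z := by
  induction L with
  | nil => simp
  | cons h t ihp =>
    intro z hz
    rw [List.dropWhile_cons] at hz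
    by_cases hc : m h < c
    · rw [if_pos (by simpa using hc)] at hz
      exact ihp hpw.of_cons z hz
    · rw [if_neg (by simpa using hc)] at hz
      rcases List.mem_cons.1 hz with rfl | hz'
      · omega
      · have := (List.pairwise_cons.1 hpw).1 z hz'
        omega

lemma fst_mem_leaves_of_mem_leafDepths {t : BinTree α} {p : α × ℕ}
    (hp : p ∈ t.leafDepths) : p.1 ∈ t.leaves :=
  List.mem_map_of_mem (f := Prod.fst) hp

/-- Gilbert–Moore style construction: recursively split a dyadic interval
`[a, a + 2^e)` in halves; elements are routed by their "midpoint" `m`. -/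
def build (m : α → ℕ) (x₀ : α) : ℕ → ℕ → List α → BinTree α
  | _, _, [] => .leaf x₀
  | _, _, [x] => .leaf x
  | 0, _, _ :: _ :: _ => .leaf x₀
  | e+1, a, x :: y :: L =>
    if ((x :: y :: L).takeWhile fun z => m z < a + 2^e).isEmpty then
      .node1 (build m x₀ e (a + 2^e) ((x :: y :: L).dropWhile fun z => m z < a + 2^e))
    else if ((x :: y :: L).dropWhile fun z => m z < a + 2^e).isEmpty then
      .node1 (build m x₀ e a ((x :: y :: L).takeWhile fun z => m z < a + 2^e))
    else
      .node2 (build m x₀ e a ((x :: y :: L).takeWhile fun z => m z < a + 2^e))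
        (build m x₀ e (a + 2^e) ((x :: y :: L).dropWhile fun z => m z < a + 2^e))

lemma build_spec (m w : α → ℕ) (x₀ : α) :
    ∀ (e a : ℕ) (L : List α), L ≠ [] →
    (∀ x ∈ L, a ≤ m x ∧ m x < a + 2 ^ e) →
    L.Pairwise (fun x y => m x + w x + w y ≤ m y) →
    (∀ x ∈ L, 1 ≤ w x) →
    (build m x₀ e a L).leaves = L ∧
      ∀ p ∈ (build m x₀ e a L).leafDepths,
        p.2 + min e (Nat.log 2 (w p.1)) ≤ e := by
  intro e
  induction e with
  | zero =>
    intro a L hne hmem hpw hw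
    match L with
    | [x] =>
      refine ⟨rfl, ?_⟩
      rintro p hp
      simp [build, BinTree.leafDepths] at hp
      subst hp; simp
    | x :: y :: L =>
      exfalso
      have h1 := hmem x (by simp)
      have h2 := hmem y (by simp)
      have h3 : m x + w x + w y ≤ m y := (List.pairwise_cons.1 hpw).1 y (by simp)
      have h4 := hw x (by simp)
      have h5 := hw y (by simp)
      simp [pow_zero] at h1 h2
      omega
  | succ e ih =>
    intro a L hne hmem hpw hw
    match L with
    | [x] =>
      refine ⟨rfl, ?_⟩
      rintro p hp
      simp [build, BinTree.leafDepths] at hp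
      subst hp; simp
    | x :: y :: L =>
      have hps : (2:ℕ) ^ (e+1) = 2 ^ e + 2 ^ e := by rw [pow_succ]; ring
      set p : α → Bool := fun z => decide (m z < a + 2^e) with hpdef
      set L0 := (x :: y :: L).takeWhile p with hL0
      set L1 := (x :: y :: L).dropWhile p with hL1
      have happ : L0 ++ L1 = x :: y :: L := by
        rw [hL0, hL1]; exact List.takeWhile_append_dropWhile (p := p) (l := x :: y :: L)
      have hmem0 : ∀ z ∈ L0, a ≤ m z ∧ m z < a + 2 ^ e := by
        intro z hz
        have h1 := List.mem_takeWhile_imp hz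
        have h2 := hmem z (by rw [← happ]; exact List.mem_append_left _ hz)
        simp [hpdef] at h1
        exact ⟨h2.1, h1⟩
      have hpw1 : L1.Pairwise (fun x y => m x + w x + w y ≤ m y) :=
        hpw.sublist (by rw [hL1]; exact List.dropWhile_sublist _)
      have hpw0 : L0.Pairwise (fun x y => m x + w x + w y ≤ m y) :=
        hpw.sublist (by rw [hL0]; exact List.takeWhile_sublist _)
      have hw0 : ∀ z ∈ L0, 1 ≤ w z := fun z hz =>
        hw z (by rw [← happ]; exact List.mem_append_left _ hz)
      have hw1 : ∀ z ∈ L1, 1 ≤ w z := fun z hz =>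
        hw z (by rw [← happ]; exact List.mem_append_right _ hz)
      have hmem1 : ∀ z ∈ L1, a + 2 ^ e ≤ m z ∧ m z < a + 2 ^ e + 2 ^ e := by
        intro z hz
        have h2 := hmem z (by rw [← happ]; exact List.mem_append_right _ hz)
        refine ⟨?_, by omega⟩
        exact dropWhile_ge (w := w) hpw z (by rw [← hL1]; exact hz)
      -- every element has small weight (since there are ≥ 2 elements)
      have hsmall : ∀ z ∈ (x :: y :: L), Nat.log 2 (w z) ≤ e := by
        intro z hz
        by_contra hbig
        push_neg at hbig
        have h2 : 2 ^ (e + 1) ≤ w z := by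
          calc 2 ^ (e+1) ≤ 2 ^ (Nat.log 2 (w z)) := Nat.pow_le_pow_right (by norm_num) hbig
          _ ≤ w z := Nat.pow_log_le_self 2 (by have := hw z hz; omega)
        have hmz := hmem z hz
        have hmx := hmem x (by simp)
        have hmy := hmem y (by simp)
        have hwy := hw y (by simp)
        rcases List.mem_cons.1 hz with rfl | hz'
        · have h3 : m z + w z + w y ≤ m y := (List.pairwise_cons.1 hpw).1 y (by simp)
          omega
        · have h3 : m x + w x + w z ≤ m z := (List.pairwise_cons.1 hpw).1 z hz'
          have hwx := hw x (by simp)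
          omega
      have wbound : ∀ (t : BinTree α) (L₂ : List α), t.leaves = L₂ →
          (∀ z ∈ L₂, z ∈ (x :: y :: L)) →
          (∀ q ∈ t.leafDepths, q.2 + min e (Nat.log 2 (w q.1)) ≤ e) →
          (∀ q ∈ t.leafDepths, (q.2 + 1) + min (e+1) (Nat.log 2 (w q.1)) ≤ e + 1) := by
        intro t L₂ hlv hsub hdep q hq
        have h1 := hdep q hq
        have h2 : q.1 ∈ (x :: y :: L) := by
          apply hsub
          rw [← hlv]
          exact fst_mem_leaves_of_mem_leafDepths hq
        have h3 := hsmall q.1 h2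
        omega
      by_cases h0 : L0.isEmpty
      · -- all elements in the right half
        have hL1eq : L1 = x :: y :: L := by
          rw [← happ, List.isEmpty_iff.1 h0, List.nil_append]
        have hne1 : L1 ≠ [] := by rw [hL1eq]; simp
        obtain ⟨ihl, ihd⟩ := ih (a + 2^e) L1 hne1 hmem1 hpw1 hw1
        have hb : build m x₀ (e+1) a (x :: y :: L)
            = .node1 (build m x₀ e (a + 2^e) L1) := by
          rw [build]
          simp only [← hpdef, ← hL0, ← hL1, if_pos h0]
        rw [hb]
        constructor
        · rw [leaves_node1, ihl, hL1eq]
        · intro q hq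
          simp only [BinTree.leafDepths, List.mem_map] at hq
          obtain ⟨r, hr, rfl⟩ := hq
          exact wbound _ L1 ihl (fun z hz => by rw [hL1eq] at hz; exact hz) ihd r hr
      · by_cases h1 : L1.isEmpty
        · have hL0eq : L0 = x :: y :: L := by
            rw [← happ, List.isEmpty_iff.1 h1, List.append_nil]
          have hne0 : L0 ≠ [] := by rw [hL0eq]; simp
          obtain ⟨ihl, ihd⟩ := ih a L0 hne0 hmem0 hpw0 hw0
          have hb : build m x₀ (e+1) a (x :: y :: L)
              = .node1 (build m x₀ e a L0) := by
            rw [build]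
            simp only [← hpdef, ← hL0, ← hL1, if_neg h0, if_pos h1]
          rw [hb]
          constructor
          · rw [leaves_node1, ihl, hL0eq]
          · intro q hq
            simp only [BinTree.leafDepths, List.mem_map] at hq
            obtain ⟨r, hr, rfl⟩ := hq
            exact wbound _ L0 ihl (fun z hz => by rw [hL0eq] at hz; exact hz) ihd r hr
        · have hne0 : L0 ≠ [] := fun h => h0 (by rw [h]; rfl)
          have hne1 : L1 ≠ [] := fun h => h1 (by rw [h]; rfl)
          obtain ⟨ihl0, ihd0⟩ := ih a L0 hne0 hmem0 hpw0 hw0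
          obtain ⟨ihl1, ihd1⟩ := ih (a + 2^e) L1 hne1 hmem1 hpw1 hw1
          have hb : build m x₀ (e+1) a (x :: y :: L)
              = .node2 (build m x₀ e a L0) (build m x₀ e (a + 2^e) L1) := by
            rw [build]
            simp only [← hpdef, ← hL0, ← hL1, if_neg h0, if_neg h1]
          rw [hb]
          constructor
          · rw [leaves_node2, ihl0, ihl1, happ]
          · intro q hq
            simp only [BinTree.leafDepths, List.mem_map, List.mem_append] at hq
            obtain ⟨r, hr | hr, rfl⟩ := hq
            · exact wbound _ L0 ihl0
                (fun z hz => by rw [← happ]; exact List.mem_append_left _ hz) ihd0 r hr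
            · exact wbound _ L1 ihl1
                (fun z hz => by rw [← happ]; exact List.mem_append_right _ hz) ihd1 r hr

end StmtAux

theorem stmt_1 {α : Type} [LinearOrder α] (S : Finset α) (hS : S.Nonempty)
    (ω : α → ℕ) (hω : ∀ x ∈ S, 0 < ω x) :
    ∃ T : BinTree α,
      T.leaves = S.sort (· ≤ ·) ∧
      ∀ p ∈ T.leafDepths,
        (p.2 : ℝ) ≤ Real.logb 2 (∑ x ∈ S, (ω x : ℝ)) - Real.logb 2 (ω p.1) + 3 := by
  classical
  obtain ⟨x₀, hx₀⟩ := hS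
  set W : ℕ := ∑ x ∈ S, ω x with hW
  have hW1 : 1 ≤ W := by
    calc 1 ≤ ω x₀ := hω x₀ hx₀
    _ ≤ W := Finset.single_le_sum (f := ω) (fun i _ => Nat.zero_le _) hx₀
  set m : α → ℕ := fun x => 2 * (∑ y ∈ S.filter (· < x), ω y) + ω x with hm
  set e : ℕ := Nat.clog 2 W + 1 with he
  set xs : List α := S.sort (· ≤ ·) with hxs
  have hxsne : xs ≠ [] := by
    have hlen : 0 < xs.length := by
      rw [hxs, Finset.length_sort]
      exact Finset.card_pos.2 ⟨x₀, hx₀⟩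
    exact List.ne_nil_of_length_pos hlen
  have hmemS : ∀ x ∈ xs, x ∈ S := fun x hx => (Finset.mem_sort _).1 hx
  -- sum bound for each element
  have hmW : ∀ x ∈ S, m x + ω x ≤ 2 * W := by
    intro x hx
    have hsub : S.filter (· < x) ⊆ S.erase x := by
      intro z hz
      rw [Finset.mem_filter] at hz
      exact Finset.mem_erase.2 ⟨ne_of_lt hz.2, hz.1⟩
    have h1 : (∑ y ∈ S.filter (· < x), ω y) ≤ ∑ y ∈ S.erase x, ω y :=
      Finset.sum_le_sum_of_subset hsub
    have h2 : ω x + ∑ y ∈ S.erase x, ω y = W := Finset.add_sum_erase S ω hx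
    simp only [hm]
    omega
  have hmem : ∀ x ∈ xs, 0 ≤ m x ∧ m x < 0 + 2 ^ e := by
    intro x hx
    refine ⟨Nat.zero_le _, ?_⟩
    have h1 := hmW x (hmemS x hx)
    have h2 : 2 * W ≤ 2 ^ e := by
      rw [he, pow_succ]
      have := Nat.le_pow_clog (by norm_num : 1 < 2) W
      omega
    have h3 := hω x (hmemS x hx)
    omega
  have hpw : xs.Pairwise (fun x y => m x + ω x + ω y ≤ m y) := by
    have hs := List.Pairwise.and_mem.1 (Finset.sortedLT_sort S).pairwise
    refine hs.imp ?_
    rintro x y ⟨hx, hy, hxy⟩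
    have hxS := hmemS x hx
    have hyS := hmemS y hy
    have hsub : insert x (S.filter (· < x)) ⊆ S.filter (· < y) := by
      intro z hz
      rcases Finset.mem_insert.1 hz with rfl | hz
      · exact Finset.mem_filter.2 ⟨hxS, hxy⟩
      · rw [Finset.mem_filter] at hz ⊢
        exact ⟨hz.1, hz.2.trans hxy⟩
    have h1 : (∑ z ∈ insert x (S.filter (· < x)), ω z) ≤ ∑ z ∈ S.filter (· < y), ω z :=
      Finset.sum_le_sum_of_subset hsub
    rw [Finset.sum_insert (by simp)] at h1
    simp only [hm]
    omega
  have hw1 : ∀ x ∈ xs, 1 ≤ ω x := fun x hx => hω x (hmemS x hx)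
  obtain ⟨hleaves, hdepth⟩ := StmtAux.build_spec m ω x₀ e 0 xs hxsne hmem hpw hw1
  refine ⟨StmtAux.build m x₀ e 0 xs, hleaves, ?_⟩
  intro p hp
  have hpS : p.1 ∈ S := by
    apply hmemS
    rw [← hleaves]
    exact StmtAux.fst_mem_leaves_of_mem_leafDepths hp
  have hωp := hω p.1 hpS
  have hωW : ω p.1 ≤ W := Finset.single_le_sum (f := ω) (fun i _ => Nat.zero_le _) hpS
  set r : ℕ := Nat.log 2 (ω p.1) with hr
  have hre : r ≤ e := by
    have h1 : 2 ^ r ≤ ω p.1 := Nat.pow_log_le_self 2 (by omega)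
    have h2 : W ≤ 2 ^ (Nat.clog 2 W) := Nat.le_pow_clog (by norm_num) W
    have h3 : 2 ^ r ≤ 2 ^ (Nat.clog 2 W) := le_trans h1 (le_trans hωW h2)
    have h4 : r ≤ Nat.clog 2 W := (Nat.pow_le_pow_iff_right (by norm_num : 1 < 2)).1 h3
    omega
  have hd := hdepth p hp
  rw [min_eq_right hre] at hd
  -- pass to the reals
  have hcast : (∑ x ∈ S, (ω x : ℝ)) = (W : ℝ) := by rw [hW]; push_cast; ring
  rw [hcast]
  have hWpos : (0:ℝ) < (W : ℝ) := by exact_mod_cast hW1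
  have hωpos : (0:ℝ) < ((ω p.1 : ℕ) : ℝ) := by exact_mod_cast hωp
  -- (e : ℝ) ≤ logb 2 W + 2
  have hclog : ((Nat.clog 2 W : ℕ) : ℝ) ≤ Real.logb 2 (W : ℝ) + 1 := by
    rcases eq_or_lt_of_le hW1 with h1 | h1
    · rw [← h1]
      simp [Nat.clog_one_right]
    · have hc1 : 1 ≤ Nat.clog 2 W := Nat.clog_pos (by norm_num) h1
      have h2 : (2:ℕ) ^ (Nat.clog 2 W - 1) < W := Nat.pow_pred_clog_lt_self (by norm_num) h1
      have h3 : ((2:ℝ)) ^ (Nat.clog 2 W - 1) ≤ (W : ℝ) := by exact_mod_cast h2.le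
      have h4 : Real.logb 2 ((2:ℝ) ^ (Nat.clog 2 W - 1)) ≤ Real.logb 2 (W : ℝ) :=
        Real.logb_le_logb_of_le (by norm_num) (by positivity) h3
      rw [Real.logb_pow, Real.logb_self_eq_one (by norm_num)] at h4
      have h5 : ((Nat.clog 2 W - 1 : ℕ) : ℝ) = (Nat.clog 2 W : ℝ) - 1 := by
        have := hc1; push_cast [this]; ring
      rw [h5] at h4
      linarith [h4]
  have hlogw : Real.logb 2 ((ω p.1 : ℕ) : ℝ) - 1 ≤ (r : ℝ) := by
    have h1 : (ω p.1 : ℕ) < 2 ^ (r + 1) := Nat.lt_pow_succ_log_self (by norm_num) _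
    have h2 : ((ω p.1 : ℕ) : ℝ) ≤ (2:ℝ) ^ (r + 1) := by exact_mod_cast h1.le
    have h3 : Real.logb 2 ((ω p.1 : ℕ) : ℝ) ≤ Real.logb 2 ((2:ℝ) ^ (r + 1)) :=
      Real.logb_le_logb_of_le (by norm_num) hωpos h2
    rw [Real.logb_pow, Real.logb_self_eq_one (by norm_num)] at h3
    push_cast at h3
    linarith
  have hd' : (p.2 : ℝ) ≤ ((Nat.clog 2 W : ℕ) : ℝ) + 1 - (r : ℝ) := by
    have h0 : p.2 + r ≤ Nat.clog 2 W + 1 := hd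
    have h := (Nat.cast_le (α := ℝ)).2 h0
    push_cast at h
    linarith
  linarith [hd', hclog, hlogw]
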